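/- arXiv:2201.08113 — 5 statements merged into one kernel-verified Lean document; each statement's English description precedes it below -/
import Mathlib

section
/- For α ∈ Σ_ℓ the following are equivalent: (a) Σ_ℓ^α = {α}; (b) Σ_ℓ^α has exactly one element; (c) α lies in the topological interior of Σ_ℓ(0) in X_ℝ. -/
open scoped BigOperators Pointwise

namespace NFC

/-- The coordinatewise embedding of the lattice `X = ℤ^g` into `X_ℝ = ℝ^g`. -/
def iota {g : ℕ} (x : Fin g → ℤ) : Fin g → ℝ := fun i => (x i : ℝ)

/-- The ℝ-linear extension of an integral linear functional `u ∈ X^∨` to `X_ℝ`. -/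
noncomputable def extd {g : ℕ} (u : (Fin g → ℤ) →ₗ[ℤ] ℤ) (x : Fin g → ℝ) : ℝ :=
  ∑ i, (u (Pi.single i 1) : ℝ) * x i

/-- `E_ℓ(u) = ℓ · u(φ(u))`. -/
def El {g : ℕ} {Y : Submodule ℤ (Fin g → ℤ)}
    (φ : ((Fin g → ℤ) →ₗ[ℤ] ℤ) → Y) (ℓ : ℕ) (u : (Fin g → ℤ) →ₗ[ℤ] ℤ) : ℤ :=
  (ℓ : ℤ) * u (φ u : Fin g → ℤ)

/-- `Σ_ℓ = {α ∈ X : E_ℓ(u) + u(α) ≥ 0 for all u ∈ X^∨}`. -/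
def SigmaL {g : ℕ} {Y : Submodule ℤ (Fin g → ℤ)}
    (φ : ((Fin g → ℤ) →ₗ[ℤ] ℤ) → Y) (ℓ : ℕ) : Set (Fin g → ℤ) :=
  {α | ∀ u : (Fin g → ℤ) →ₗ[ℤ] ℤ, 0 ≤ El φ ℓ u + u α}

/-- The Voronoi polytope `Σ_ℓ(c)`, defined w.r.t. the norm `‖z‖ = √(B̄(z,z))`. -/
noncomputable def VorP {g : ℕ} {Y : Submodule ℤ (Fin g → ℤ)}
    (Bb : (Fin g → ℝ) →ₗ[ℝ] (Fin g → ℝ) →ₗ[ℝ] ℝ)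
    (φ : ((Fin g → ℤ) →ₗ[ℤ] ℤ) → Y) (ℓ : ℕ)
    (c : (Fin g → ℤ) →ₗ[ℤ] ℤ) : Set (Fin g → ℝ) :=
  {x | ∀ u : (Fin g → ℤ) →ₗ[ℤ] ℤ,
    Real.sqrt (Bb (x - iota ((2 * (ℓ : ℤ)) • ((φ c : Fin g → ℤ))))
               (x - iota ((2 * (ℓ : ℤ)) • ((φ c : Fin g → ℤ))))) ≤
    Real.sqrt (Bb (x - iota ((2 * (ℓ : ℤ)) • ((φ u : Fin g → ℤ))))
               (x - iota ((2 * (ℓ : ℤ)) • ((φ u : Fin g → ℤ)))))}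

/-- A subset `Δ ⊆ X_ℝ` is integral: a bounded convex polytope equal to the convex hull
of `Δ ∩ X`, symmetric about `0`, containing `0`, with `Δ ∩ X` containing a ℤ-basis. -/
def IsIntegral {g : ℕ} (Δ : Set (Fin g → ℝ)) : Prop :=
  Bornology.IsBounded Δ ∧
  Δ = convexHull ℝ (Δ ∩ Set.range (iota (g := g))) ∧
  Δ = -Δ ∧ (0 : Fin g → ℝ) ∈ Δ ∧
  ∃ b : Module.Basis (Fin g) ℤ (Fin g → ℤ), ∀ i, iota (b i) ∈ Δ

/-- `Σ_ℓ^α = (α + 2ℓφ(X^∨)) ∩ Σ_ℓ`. -/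
def SigmaAlpha {g : ℕ} {Y : Submodule ℤ (Fin g → ℤ)}
    (φ : ((Fin g → ℤ) →ₗ[ℤ] ℤ) → Y) (ℓ : ℕ) (α : Fin g → ℤ) : Set (Fin g → ℤ) :=
  {β | β ∈ SigmaL φ ℓ ∧ ∃ u : (Fin g → ℤ) →ₗ[ℤ] ℤ, β = α + (2 * (ℓ : ℤ)) • ((φ u : Fin g → ℤ))}

/-- The convex cone generated by a set `S` (the set of all nonnegative combinations). -/
def conicHull {M : Type*} [AddCommMonoid M] [Module ℝ M] (S : Set M) : Set M :=
  {y | ∃ (n : ℕ) (c : Fin n → ℝ) (v : Fin n → M),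
    (∀ i, 0 ≤ c i) ∧ (∀ i, v i ∈ S) ∧ y = ∑ i, c i • v i}

/-- `Cone(C_ℓ^β)`: the convex cone in `X_ℝ` generated by `{γ − β : γ ∈ Σ_ℓ}`. -/
def coneC {g : ℕ} {Y : Submodule ℤ (Fin g → ℤ)}
    (φ : ((Fin g → ℤ) →ₗ[ℤ] ℤ) → Y) (ℓ : ℕ) (β : Fin g → ℤ) : Set (Fin g → ℝ) :=
  conicHull {w | ∃ γ ∈ SigmaL φ ℓ, w = iota (γ - β)}


set_option maxHeartbeats 1000000 in
/-- for `α ∈ Σ_ℓ`, TFAE: `Σ_ℓ^α = {α}`; `Σ_ℓ^α` has exactly one element;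
`α` lies in the interior of `Σ_ℓ(0)`. -/
theorem statement11
    (g : ℕ) (hg : 1 ≤ g)
    (Y : Submodule ℤ (Fin g → ℤ))
    (hYfin : Y.toAddSubgroup.index ≠ 0)
    (B : Y →ₗ[ℤ] (Fin g → ℤ) →ₗ[ℤ] ℤ)
    (hBsymm : ∀ y z : Y, B y (z : Fin g → ℤ) = B z (y : Fin g → ℤ))
    (hBpos : ∀ y : Y, y ≠ 0 → 0 < B y (y : Fin g → ℤ))
    (N : ℕ) (hN : N = (LinearMap.range B).toAddSubgroup.index) (hNpos : 0 < N)
    (φ : ((Fin g → ℤ) →ₗ[ℤ] ℤ) → Y)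
    (hφ : ∀ u : (Fin g → ℤ) →ₗ[ℤ] ℤ, B (φ u) = (N : ℤ) • u)
    (Bb : (Fin g → ℝ) →ₗ[ℝ] (Fin g → ℝ) →ₗ[ℝ] ℝ)
    (hBbsymm : ∀ x y : Fin g → ℝ, Bb x y = Bb y x)
    (hBbpos : ∀ x : Fin g → ℝ, x ≠ 0 → 0 < Bb x x)
    (hBbcompat : ∀ (y : Y) (x : Fin g → ℤ), Bb (iota (y : Fin g → ℤ)) (iota x) = (B y x : ℝ))
    (ℓ : ℕ) (hℓ : 0 < ℓ)
    (α : Fin g → ℤ) (hα : α ∈ SigmaL φ ℓ) :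
    (SigmaAlpha φ ℓ α = {α} ↔ ∃ β : Fin g → ℤ, SigmaAlpha φ ℓ α = {β}) ∧
    (SigmaAlpha φ ℓ α = {α} ↔ iota α ∈ interior (VorP Bb φ ℓ 0)) := by
  classical
  haveI : Nonempty (Fin g) := ⟨⟨0, hg⟩⟩
  -- basic algebraic facts
  have hBinj : ∀ y : Y, B y = 0 → y = 0 := by
    intro y h
    by_contra hy
    have h2 := hBpos y hy
    rw [h] at h2
    simp at h2
  have hNZ : ((N : ℤ)) ≠ 0 := by exact_mod_cast hNpos.ne'
  have hφ0 : φ 0 = 0 := by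
    apply hBinj
    rw [hφ]
    simp
  have hφneg : ∀ u, φ (-u) = - φ u := by
    intro u
    have h : φ (-u) + φ u = 0 := by
      apply hBinj
      rw [map_add, hφ, hφ]
      simp
    exact eq_neg_of_add_eq_zero_left h
  have hφsub : ∀ u v, φ (u - v) = φ u - φ v := by
    intro u v
    have h : φ (u - v) - (φ u - φ v) = 0 := by
      apply hBinj
      rw [map_sub, map_sub, hφ, hφ, hφ, smul_sub]
      abel
    exact sub_eq_zero.mp h
  have hBφ : ∀ (u : (Fin g → ℤ) →ₗ[ℤ] ℤ) (x : Fin g → ℤ),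
      B (φ u) x = (N : ℤ) * u x := by
    intro u x
    rw [hφ]
    simp [smul_eq_mul]
  have husymm : ∀ u v : (Fin g → ℤ) →ₗ[ℤ] ℤ,
      u ((φ v : Y) : Fin g → ℤ) = v ((φ u : Y) : Fin g → ℤ) := by
    intro u v
    have h := hBsymm (φ u) (φ v)
    rw [hBφ, hBφ] at h
    exact mul_left_cancel₀ hNZ h
  have hαS : ∀ u : (Fin g → ℤ) →ₗ[ℤ] ℤ, (0:ℤ) ≤ El φ ℓ u + u α := hα
  have halpha_le : ∀ u : (Fin g → ℤ) →ₗ[ℤ] ℤ,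
      u α ≤ (ℓ : ℤ) * u ((φ u : Y) : Fin g → ℤ) := by
    intro u
    have h := hαS (-u)
    have e1 : ((φ (-u) : Y) : Fin g → ℤ) = -((φ u : Y) : Fin g → ℤ) := by
      rw [hφneg]; rfl
    simp only [El, e1, LinearMap.neg_apply, map_neg, neg_neg] at h
    linarith
  have hαmem : α ∈ SigmaAlpha φ ℓ α := by
    refine ⟨hα, 0, ?_⟩
    rw [hφ0]
    simp
  have iff1 : SigmaAlpha φ ℓ α = {α} ↔ ∃ β : Fin g → ℤ, SigmaAlpha φ ℓ α = {β} := by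
    constructor
    · exact fun h => ⟨α, h⟩
    · rintro ⟨β, h⟩
      have hab : α = β := by
        rw [← Set.mem_singleton_iff, ← h]
        exact hαmem
      rw [h, hab]
  -- analytic preliminaries
  have hq0 : ∀ x : Fin g → ℝ, 0 ≤ Bb x x := by
    intro x
    rcases eq_or_ne x 0 with rfl | h
    · simp
    · exact (hBbpos x h).le
  have hexpand : ∀ x w : Fin g → ℝ,
      Bb (x - w) (x - w) = Bb x x - 2 * Bb x w + Bb w w := by
    intro x w
    simp only [map_sub, LinearMap.sub_apply]
    linarith [hBbsymm w x]
  have hsqrtle : ∀ a b : ℝ, 0 ≤ a → 0 ≤ b → Real.sqrt a ≤ Real.sqrt b → a ≤ b := by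
    intro a b ha hb h
    nlinarith [Real.sq_sqrt ha, Real.sq_sqrt hb, Real.sqrt_nonneg a, Real.sqrt_nonneg b]
  have hiota0 : iota (0 : Fin g → ℤ) = 0 := by
    funext i; simp [iota]
  have hiota_inj : ∀ z : Fin g → ℤ, iota z = 0 → z = 0 := by
    intro z h
    funext i
    have h2 := congrFun h i
    simpa [iota] using h2
  have hw0 : iota ((2 * (ℓ : ℤ)) •
      ((φ (0 : (Fin g → ℤ) →ₗ[ℤ] ℤ) : Y) : Fin g → ℤ)) = 0 := by
    rw [hφ0]
    simpa using hiota0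
  have hVor : ∀ x : Fin g → ℝ, x ∈ VorP Bb φ ℓ 0 ↔
      ∀ u : (Fin g → ℤ) →ₗ[ℤ] ℤ,
        2 * Bb x (iota ((2 * (ℓ : ℤ)) • ((φ u : Y) : Fin g → ℤ))) ≤
        Bb (iota ((2 * (ℓ : ℤ)) • ((φ u : Y) : Fin g → ℤ)))
           (iota ((2 * (ℓ : ℤ)) • ((φ u : Y) : Fin g → ℤ))) := by
    intro x
    constructor
    · intro h u
      have h1 := h u
      rw [hw0, sub_zero] at h1
      have h2 := hsqrtle _ _ (hq0 x) (hq0 _) h1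
      rw [hexpand] at h2
      linarith
    · intro h u
      show Real.sqrt _ ≤ Real.sqrt _
      rw [hw0, sub_zero]
      apply Real.sqrt_le_sqrt
      rw [hexpand]
      linarith [h u]
  have hcomp : ∀ (u : (Fin g → ℤ) →ₗ[ℤ] ℤ) (x : Fin g → ℤ),
      Bb (iota ((2 * (ℓ : ℤ)) • ((φ u : Y) : Fin g → ℤ))) (iota x) =
        2 * (ℓ : ℝ) * (N : ℝ) * ((u x : ℤ) : ℝ) := by
    intro u x
    have hco : ((2 * (ℓ : ℤ)) • ((φ u : Y) : Fin g → ℤ)) =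
        (((2 * (ℓ : ℤ)) • φ u : Y) : Fin g → ℤ) := rfl
    rw [hco, hBbcompat]
    have h1 : B ((2 * (ℓ : ℤ)) • φ u) x = (2 * (ℓ : ℤ)) * ((N : ℤ) * u x) := by
      rw [map_smul, LinearMap.smul_apply, smul_eq_mul, hBφ]
    rw [h1]
    push_cast
    ring
  have hαw : ∀ u : (Fin g → ℤ) →ₗ[ℤ] ℤ,
      Bb (iota α) (iota ((2 * (ℓ : ℤ)) • ((φ u : Y) : Fin g → ℤ))) =
        2 * (ℓ : ℝ) * (N : ℝ) * ((u α : ℤ) : ℝ) := by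
    intro u
    rw [hBbsymm, hcomp]
  have hww : ∀ u : (Fin g → ℤ) →ₗ[ℤ] ℤ,
      Bb (iota ((2 * (ℓ : ℤ)) • ((φ u : Y) : Fin g → ℤ)))
         (iota ((2 * (ℓ : ℤ)) • ((φ u : Y) : Fin g → ℤ))) =
        4 * (ℓ : ℝ)^2 * (N : ℝ) * ((u ((φ u : Y) : Fin g → ℤ) : ℤ) : ℝ) := by
    intro u
    rw [hcomp u ((2 * (ℓ : ℤ)) • ((φ u : Y) : Fin g → ℤ))]
    rw [map_smul, smul_eq_mul]
    push_cast
    ring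
  have hN' : (0:ℝ) < N := by exact_mod_cast hNpos
  have hℓ' : (0:ℝ) < ℓ := by exact_mod_cast hℓ
  have hstrict_of_P : (∀ u : (Fin g → ℤ) →ₗ[ℤ] ℤ, ((φ u : Y) : Fin g → ℤ) ≠ 0 →
        u α < (ℓ : ℤ) * u ((φ u : Y) : Fin g → ℤ)) →
      ∀ u : (Fin g → ℤ) →ₗ[ℤ] ℤ, ((φ u : Y) : Fin g → ℤ) ≠ 0 →
        2 * Bb (iota α) (iota ((2 * (ℓ : ℤ)) • ((φ u : Y) : Fin g → ℤ))) <
        Bb (iota ((2 * (ℓ : ℤ)) • ((φ u : Y) : Fin g → ℤ)))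
           (iota ((2 * (ℓ : ℤ)) • ((φ u : Y) : Fin g → ℤ))) := by
    intro hP u hu
    rw [hαw, hww]
    have h1 := hP u hu
    have h2 : ((u α : ℤ) : ℝ) < (ℓ : ℝ) * ((u ((φ u : Y) : Fin g → ℤ) : ℤ) : ℝ) := by
      exact_mod_cast h1
    have h4 := mul_lt_mul_of_pos_left h2 (show (0:ℝ) < 4 * (ℓ:ℝ) * (N:ℝ) by positivity)
    linarith [h4]
  -- continuity of the quadratic form
  have hcont1 : ∀ y : Fin g → ℝ, Continuous fun x : Fin g → ℝ => Bb x y := by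
    intro y
    exact (Bb.flip y).continuous_of_finiteDimensional
  have hq_cont : Continuous fun x : Fin g → ℝ => Bb x x := by
    have he : (fun x : Fin g → ℝ => Bb x x) =
        fun x => ∑ i, x i * (Bb (fun j => if i = j then (1:ℝ) else 0)) x := by
      funext x
      rw [LinearMap.pi_apply_eq_sum_univ Bb x]
      simp [LinearMap.sum_apply, LinearMap.smul_apply, smul_eq_mul]
    rw [he]
    exact continuous_finset_sum _ fun i _ =>
      (continuous_apply i).mul (Bb _).continuous_of_finiteDimensional
  -- minimum of q on the unit sphere
  have hsne : (Metric.sphere (0 : Fin g → ℝ) 1).Nonempty :=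
    NormedSpace.sphere_nonempty.mpr zero_le_one
  obtain ⟨x₀, hx₀s, hx₀min⟩ :=
    (isCompact_sphere (0 : Fin g → ℝ) 1).exists_isMinOn hsne hq_cont.continuousOn
  have hx₀ne : x₀ ≠ 0 := by
    intro h
    rw [h] at hx₀s
    simp at hx₀s
  have hm_pos : 0 < Bb x₀ x₀ := hBbpos x₀ hx₀ne
  set m : ℝ := Bb x₀ x₀ with hm_def
  have hm_le : ∀ y : Fin g → ℝ, m * ‖y‖^2 ≤ Bb y y := by
    intro y
    rcases eq_or_ne y 0 with rfl | hy
    · simp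
    · have hny : (0:ℝ) < ‖y‖ := norm_pos_iff.mpr hy
      have h1 : ‖y‖⁻¹ • y ∈ Metric.sphere (0 : Fin g → ℝ) 1 := by
        rw [mem_sphere_zero_iff_norm, norm_smul, norm_inv, norm_norm,
          inv_mul_cancel₀ hny.ne']
      have h2 : Bb x₀ x₀ ≤ Bb (‖y‖⁻¹ • y) (‖y‖⁻¹ • y) := hx₀min h1
      have h3 : Bb (‖y‖⁻¹ • y) (‖y‖⁻¹ • y) = ‖y‖⁻¹ * (‖y‖⁻¹ * Bb y y) := by
        simp only [map_smul, LinearMap.smul_apply, smul_eq_mul]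
      rw [h3] at h2
      have h4 := mul_le_mul_of_nonneg_left h2 (sq_nonneg ‖y‖)
      calc m * ‖y‖^2 = ‖y‖^2 * m := by ring
      _ ≤ ‖y‖^2 * (‖y‖⁻¹ * (‖y‖⁻¹ * Bb y y)) := h4
      _ = Bb y y := by field_simp
  -- maximum of q on the closed unit ball around iota α
  obtain ⟨xM, hxM, hxMmax⟩ :=
    (isCompact_closedBall (iota α) 1).exists_isMaxOn
      ⟨iota α, Metric.mem_closedBall_self zero_le_one⟩ hq_cont.continuousOn
  set M : ℝ := Bb xM xM with hM_def
  have hM0 : 0 ≤ M :=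
    le_trans (hq0 (iota α)) (hxMmax (Metric.mem_closedBall_self zero_le_one))
  set C : ℤ := ⌈Real.sqrt (4 * M / m)⌉ with hC_def
  have hC : ∀ z : Fin g → ℤ, Bb (iota z) (iota z) < 4 * M → ∀ i, |z i| ≤ C := by
    intro z hz i
    have h1 : m * ‖iota z‖^2 ≤ Bb (iota z) (iota z) := hm_le _
    have h2 : ‖iota z‖^2 < 4 * M / m := by
      rw [lt_div_iff₀ hm_pos]
      nlinarith
    have h3 : ‖iota z‖ ≤ Real.sqrt (4 * M / m) := by
      calc ‖iota z‖ = Real.sqrt (‖iota z‖^2) := (Real.sqrt_sq (norm_nonneg _)).symm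
      _ ≤ _ := Real.sqrt_le_sqrt h2.le
    have h4 : |(z i : ℝ)| ≤ ‖iota z‖ := by
      have h5 := norm_le_pi_norm (iota z) i
      simpa [iota] using h5
    have h6 : (|z i| : ℝ) ≤ (C : ℝ) := by
      push_cast
      exact le_trans (le_trans h4 h3) (Int.le_ceil _)
    exact_mod_cast h6
  set S : Finset (Fin g → ℤ) :=
    (Finset.Icc (fun _ => -C) (fun _ => C)).filter
      (fun z => z ≠ 0 ∧ 2 * Bb (iota α) (iota z) < Bb (iota z) (iota z)) with hS_def
  have hmem_S : ∀ z : Fin g → ℤ, z ≠ 0 → Bb (iota z) (iota z) < 4 * M →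
      2 * Bb (iota α) (iota z) < Bb (iota z) (iota z) → z ∈ S := by
    intro z h0 h1 h2
    refine Finset.mem_filter.mpr ⟨?_, h0, h2⟩
    rw [Finset.mem_Icc]
    constructor
    · intro i
      exact (abs_le.mp (hC z h1 i)).1
    · intro i
      exact (abs_le.mp (hC z h1 i)).2
  -- P implies interior
  have hint_of_P : (∀ u : (Fin g → ℤ) →ₗ[ℤ] ℤ, ((φ u : Y) : Fin g → ℤ) ≠ 0 →
        u α < (ℓ : ℤ) * u ((φ u : Y) : Fin g → ℤ)) →
      iota α ∈ interior (VorP Bb φ ℓ 0) := by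
    intro hP
    set U : Set (Fin g → ℝ) := Metric.ball (iota α) 1 ∩
      ⋂ z ∈ S, {x : Fin g → ℝ | 2 * Bb x (iota z) < Bb (iota z) (iota z)} with hU_def
    have hUopen : IsOpen U := by
      apply IsOpen.inter Metric.isOpen_ball
      apply isOpen_biInter_finset
      intro z _
      exact isOpen_lt (continuous_const.mul (hcont1 (iota z))) continuous_const
    have hαU : iota α ∈ U := by
      constructor
      · exact Metric.mem_ball_self one_pos
      · refine Set.mem_iInter₂.mpr fun z hz => ?_
        exact (Finset.mem_filter.mp hz).2.2
    have hUsub : U ⊆ VorP Bb φ ℓ 0 := by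
      intro x hx
      rw [hVor x]
      intro u
      set z : Fin g → ℤ := (2 * (ℓ : ℤ)) • ((φ u : Y) : Fin g → ℤ) with hz_def
      rcases eq_or_ne z 0 with h0 | h0
      · rw [h0, hiota0]
        simp
      · have hwne : iota z ≠ 0 := fun h => h0 (hiota_inj z h)
        by_cases hbig : 4 * M ≤ Bb (iota z) (iota z)
        · have hqx : Bb x x ≤ M := hxMmax (Metric.ball_subset_closedBall hx.1)
          have hnn := hq0 ((x + x) - iota z)
          have hswap : Bb ((x + x) - iota z) ((x + x) - iota z) =
              4 * Bb x x - 4 * Bb x (iota z) + Bb (iota z) (iota z) := by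
            rw [hexpand]
            simp only [map_add, LinearMap.add_apply]
            ring
          rw [hswap] at hnn
          linarith
        · push_neg at hbig
          have hφune : ((φ u : Y) : Fin g → ℤ) ≠ 0 := by
            intro h
            apply h0
            rw [hz_def, h]
            simp
          have hzS : z ∈ S := hmem_S z h0 hbig (hstrict_of_P hP u hφune)
          have hx2 := hx.2
          rw [Set.mem_iInter₂] at hx2
          exact (hx2 z hzS).le
    exact interior_maximal hUsub hUopen hαU
  -- interior implies P
  have hP_of_int : iota α ∈ interior (VorP Bb φ ℓ 0) →
      ∀ u : (Fin g → ℤ) →ₗ[ℤ] ℤ, ((φ u : Y) : Fin g → ℤ) ≠ 0 →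
        u α < (ℓ : ℤ) * u ((φ u : Y) : Fin g → ℤ) := by
    intro hint u hu
    set z : Fin g → ℤ := (2 * (ℓ : ℤ)) • ((φ u : Y) : Fin g → ℤ) with hz_def
    have hz0 : z ≠ 0 := by
      rw [hz_def]
      intro h
      rcases smul_eq_zero.mp h with h2 | h2
      · have hl0 : (ℓ : ℤ) ≠ 0 := by exact_mod_cast hℓ.ne'
        omega
      · exact hu h2
    have hwne : iota z ≠ 0 := fun h => hz0 (hiota_inj z h)
    have hqw : 0 < Bb (iota z) (iota z) := hBbpos _ hwne
    have hstrict : 2 * Bb (iota α) (iota z) < Bb (iota z) (iota z) := by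
      by_contra hns
      push_neg at hns
      obtain ⟨ε, hε, hball⟩ := Metric.mem_nhds_iff.mp (mem_interior_iff_mem_nhds.mp hint)
      have hnw : (0:ℝ) < ‖iota z‖ := norm_pos_iff.mpr hwne
      set t : ℝ := ε / (2 * ‖iota z‖) with ht_def
      have ht : 0 < t := by positivity
      have hx' : iota α + t • iota z ∈ Metric.ball (iota α) ε := by
        rw [Metric.mem_ball, dist_eq_norm]
        simp only [add_sub_cancel_left]
        rw [norm_smul, Real.norm_eq_abs, abs_of_pos ht]
        have he : t * ‖iota z‖ = ε / 2 := by
          rw [ht_def]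
          field_simp
        rw [he]
        linarith
      have hmem := hball hx'
      rw [hVor] at hmem
      have h1 := hmem u
      rw [← hz_def] at h1
      have h2 : Bb (iota α + t • iota z) (iota z) =
          Bb (iota α) (iota z) + t * Bb (iota z) (iota z) := by
        rw [map_add, LinearMap.add_apply, map_smul, LinearMap.smul_apply, smul_eq_mul]
      nlinarith
    rw [hz_def] at hstrict
    rw [hαw u, hww u] at hstrict
    have h3 : ((u α : ℤ) : ℝ) < (ℓ : ℝ) * ((u ((φ u : Y) : Fin g → ℤ) : ℤ) : ℝ) := by
      by_contra hcon
      push_neg at hcon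
      have h5 := mul_le_mul_of_nonneg_left hcon (show (0:ℝ) ≤ 4 * (ℓ:ℝ) * (N:ℝ) by positivity)
      linarith [hstrict]
    exact_mod_cast h3
  -- P implies singleton
  have hsingle_of_P : (∀ u : (Fin g → ℤ) →ₗ[ℤ] ℤ, ((φ u : Y) : Fin g → ℤ) ≠ 0 →
        u α < (ℓ : ℤ) * u ((φ u : Y) : Fin g → ℤ)) →
      SigmaAlpha φ ℓ α = {α} := by
    intro hP
    apply Set.eq_singleton_iff_unique_mem.mpr
    refine ⟨hαmem, ?_⟩
    rintro β ⟨hbSig, u, rfl⟩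
    rcases eq_or_ne ((φ u : Y) : Fin g → ℤ) 0 with h0 | h0
    · rw [h0]
      simp
    · exfalso
      have hβS : ∀ v : (Fin g → ℤ) →ₗ[ℤ] ℤ,
          (0:ℤ) ≤ El φ ℓ v + v (α + (2 * (ℓ : ℤ)) • ((φ u : Y) : Fin g → ℤ)) := hbSig
      have e1 : ((φ (-u) : Y) : Fin g → ℤ) = -((φ u : Y) : Fin g → ℤ) := by
        rw [hφneg]; rfl
      have h1 := hβS (-u)
      simp only [El, e1, LinearMap.neg_apply, map_neg, map_add, map_smul,
        smul_eq_mul, neg_neg] at h1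
      have h2 := hP (-u) (by rw [e1]; simpa using h0)
      simp only [El, e1, LinearMap.neg_apply, map_neg, neg_neg] at h2
      linarith
  -- singleton implies P
  have hP_of_single : SigmaAlpha φ ℓ α = {α} →
      ∀ u : (Fin g → ℤ) →ₗ[ℤ] ℤ, ((φ u : Y) : Fin g → ℤ) ≠ 0 →
        u α < (ℓ : ℤ) * u ((φ u : Y) : Fin g → ℤ) := by
    intro h u hu
    rcases lt_or_eq_of_le (halpha_le u) with hlt | heq
    · exact hlt
    · exfalso
      have e1 : ((φ (-u) : Y) : Fin g → ℤ) = -((φ u : Y) : Fin g → ℤ) := by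
        rw [hφneg]; rfl
      set β : Fin g → ℤ := α + (2 * (ℓ : ℤ)) • ((φ (-u) : Y) : Fin g → ℤ) with hβ_def
      have hβmem : β ∈ SigmaAlpha φ ℓ α := by
        refine ⟨?_, -u, rfl⟩
        intro v
        show (0:ℤ) ≤ El φ ℓ v + v β
        have e2 : ((φ (v - u) : Y) : Fin g → ℤ) =
            ((φ v : Y) : Fin g → ℤ) - ((φ u : Y) : Fin g → ℤ) := by
          rw [hφsub]; rfl
        have key : El φ ℓ v + v β = El φ ℓ (v - u) + (v - u) α := by
          simp only [El, hβ_def, e1, e2, map_add, map_sub, map_neg, map_smul,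
            LinearMap.sub_apply, smul_eq_mul]
          linear_combination (ℓ : ℤ) * husymm u v + heq
        rw [key]
        exact hαS (v - u)
      have hβα : β = α := by
        rw [h] at hβmem
        exact hβmem
      rw [hβ_def] at hβα
      have hz : (2 * (ℓ : ℤ)) • ((φ (-u) : Y) : Fin g → ℤ) = 0 := by
        have h3 := hβα
        nth_rewrite 2 [← add_zero α] at h3
        exact add_left_cancel h3
      rcases smul_eq_zero.mp hz with h2 | h2
      · have hl0 : (ℓ : ℤ) ≠ 0 := by exact_mod_cast hℓ.ne'
        omega
      · rw [e1] at h2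
        exact hu (neg_eq_zero.mp h2)
  refine ⟨iff1, ?_⟩
  constructor
  · intro h
    exact hint_of_P (hP_of_single h)
  · intro h
    exact hsingle_of_P (hP_of_int h)


end NFC
end

section
/- Let α, γ ∈ Σ_ℓ and v ∈ X^∨ be such that β := α − 2ℓφ(v) ∈ Σ_ℓ. Then v(γ − β) ≥ 0, with equality if and only if γ − β + α ∈ Σ_ℓ. -/
open scoped BigOperators Pointwise

namespace NFC

/-- if `α, γ ∈ Σ_ℓ`, `v ∈ X^∨` and `β := α − 2ℓφ(v) ∈ Σ_ℓ`, then
`v(γ − β) ≥ 0`, with equality iff `γ − β + α ∈ Σ_ℓ`. -/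
theorem statement13
    (g : ℕ) (hg : 1 ≤ g)
    (Y : Submodule ℤ (Fin g → ℤ))
    (hYfin : Y.toAddSubgroup.index ≠ 0)
    (B : Y →ₗ[ℤ] (Fin g → ℤ) →ₗ[ℤ] ℤ)
    (hBsymm : ∀ y z : Y, B y (z : Fin g → ℤ) = B z (y : Fin g → ℤ))
    (hBpos : ∀ y : Y, y ≠ 0 → 0 < B y (y : Fin g → ℤ))
    (N : ℕ) (hN : N = (LinearMap.range B).toAddSubgroup.index) (hNpos : 0 < N)
    (φ : ((Fin g → ℤ) →ₗ[ℤ] ℤ) → Y)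
    (hφ : ∀ u : (Fin g → ℤ) →ₗ[ℤ] ℤ, B (φ u) = (N : ℤ) • u)
    (ℓ : ℕ) (hℓ : 0 < ℓ)
    (α : Fin g → ℤ) (hα : α ∈ SigmaL φ ℓ)
    (γ : Fin g → ℤ) (hγ : γ ∈ SigmaL φ ℓ)
    (v : (Fin g → ℤ) →ₗ[ℤ] ℤ)
    (hβ : α - (2 * (ℓ : ℤ)) • ((φ v : Fin g → ℤ)) ∈ SigmaL φ ℓ) :
    0 ≤ v (γ - (α - (2 * (ℓ : ℤ)) • ((φ v : Fin g → ℤ)))) ∧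
    (v (γ - (α - (2 * (ℓ : ℤ)) • ((φ v : Fin g → ℤ)))) = 0 ↔
      γ - (α - (2 * (ℓ : ℤ)) • ((φ v : Fin g → ℤ))) + α ∈ SigmaL φ ℓ) := by
  have hNne : (N : ℤ) ≠ 0 := by exact_mod_cast hNpos.ne'
  -- B is injective
  have Binj : ∀ y : Y, B y = 0 → y = 0 := by
    intro y hy
    by_contra h
    have h2 := hBpos y h
    rw [hy] at h2
    simp at h2
  -- φ is additive
  have φadd : ∀ u w : (Fin g → ℤ) →ₗ[ℤ] ℤ, φ (u + w) = φ u + φ w := by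
    intro u w
    have h : B (φ (u + w) - (φ u + φ w)) = 0 := by
      rw [map_sub, map_add, hφ, hφ, hφ, smul_add]
      abel
    exact sub_eq_zero.mp (Binj _ h)
  -- symmetry: u(φ w) = w(φ u)
  have φsymm : ∀ u w : (Fin g → ℤ) →ₗ[ℤ] ℤ,
      u ((φ w : Fin g → ℤ)) = w ((φ u : Fin g → ℤ)) := by
    intro u w
    have h := hBsymm (φ u) (φ w)
    rw [hφ, hφ] at h
    simp only [LinearMap.smul_apply, smul_eq_mul] at h
    exact mul_left_cancel₀ hNne h
  have φneg : φ (-v) = -φ v := by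
    have h : B (φ (-v) + φ v) = 0 := by
      rw [map_add, hφ, hφ, smul_neg]
      abel
    exact eq_neg_of_add_eq_zero_left (Binj _ h)
  set t : ℤ := v ((φ v : Fin g → ℤ)) with ht
  set a : ℤ := v α with ha
  set c : ℤ := v γ with hc
  -- from hα at -v : a ≤ ℓ t
  have h1 : a ≤ (ℓ : ℤ) * t := by
    have h := hα (-v)
    simp only [El, φneg] at h
    simp only [LinearMap.neg_apply, NegMemClass.coe_neg, map_neg, neg_neg] at h
    linarith
  -- from hβ at v : ℓ t ≤ a
  have h2 : (ℓ : ℤ) * t ≤ a := by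
    have h := hβ v
    simp only [El, map_sub, map_smul, smul_eq_mul] at h
    linarith
  have hat : a = (ℓ : ℤ) * t := le_antisymm h1 h2
  -- from hγ at v : -ℓ t ≤ c
  have h3 : 0 ≤ (ℓ : ℤ) * t + c := hγ v
  -- value of v(γ - β)
  have hval : v (γ - (α - (2 * (ℓ : ℤ)) • ((φ v : Fin g → ℤ)))) = c + (ℓ : ℤ) * t := by
    simp only [map_sub, map_smul, smul_eq_mul, ← ht, ← ha, ← hc]
    rw [hat]; ring
  constructor
  · rw [hval]; linarith
  · rw [hval]
    constructor
    · -- equality ⟹ membership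
      intro heq
      intro u
      have hG := hγ (u + v)
      simp only [El, φadd, Submodule.coe_add, map_add, LinearMap.add_apply] at hG ⊢
      have hs := φsymm u v
      simp only [map_sub, map_smul, smul_eq_mul, ← ht, ← ha, ← hc] at hG ⊢
      have hc' : c = -((ℓ : ℤ) * t) := by linarith
      rw [hc'] at hG
      nlinarith [hG]
    · -- membership ⟹ equality
      intro hmem
      have h := hmem (-v)
      simp only [El, φneg, LinearMap.neg_apply, NegMemClass.coe_neg, map_neg, neg_neg,
        map_add, map_sub, map_smul, smul_eq_mul, ← ht, ← ha, ← hc] at h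
      linarith

end NFC
end

section
/- Assume Σ_ℓ(0) is integral. Let α ∈ Σ_ℓ, let β, β′ ∈ Σ_ℓ^α, and let x ∈ Cone(C_ℓ^β). Then: (1) v_β(x) ≥ v_{β′}(x), with equality if and only if x ∈ Cone(C_ℓ^{β′}); (2) v_β(x) ≥ 0, with equality if and only if x ∈ Cone(C_ℓ^α). -/
open scoped BigOperators Pointwise

namespace NFC

section Aux


lemma extd_iota {g : ℕ} (u : (Fin g → ℤ) →ₗ[ℤ] ℤ) (z : Fin g → ℤ) :
    extd u (iota z) = (u z : ℝ) := by
  rw [LinearMap.pi_apply_eq_sum_univ u z]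
  push_cast
  unfold extd iota
  refine Finset.sum_congr rfl fun i _ => ?_
  have h : (Pi.single i 1 : Fin g → ℤ) = fun j => if i = j then 1 else 0 := by
    ext j; simp [Pi.single_apply, eq_comm]
  rw [h, smul_eq_mul]; push_cast; ring

lemma extd_sub {g : ℕ} (u v : (Fin g → ℤ) →ₗ[ℤ] ℤ) (x : Fin g → ℝ) :
    extd (u - v) x = extd u x - extd v x := by
  unfold extd
  rw [← Finset.sum_sub_distrib]
  refine Finset.sum_congr rfl fun i _ => ?_
  simp [LinearMap.sub_apply, sub_mul]

lemma extd_zero {g : ℕ} (x : Fin g → ℝ) : extd (0 : (Fin g → ℤ) →ₗ[ℤ] ℤ) x = 0 := by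
  simp [extd]

lemma extd_sum {g : ℕ} (u : (Fin g → ℤ) →ₗ[ℤ] ℤ) {n : ℕ} (c : Fin n → ℝ)
    (v : Fin n → (Fin g → ℝ)) :
    extd u (∑ i, c i • v i) = ∑ i, c i * extd u (v i) := by
  unfold extd
  simp only [Finset.sum_apply, Pi.smul_apply, smul_eq_mul, Finset.mul_sum]
  rw [Finset.sum_comm]
  refine Finset.sum_congr rfl fun i _ => Finset.sum_congr rfl fun j _ => by ring

end Aux

section PhiAlg
variable {g : ℕ} {Y : Submodule ℤ (Fin g → ℤ)}
  (B : Y →ₗ[ℤ] (Fin g → ℤ) →ₗ[ℤ] ℤ)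
  (hBsymm : ∀ y z : Y, B y (z : Fin g → ℤ) = B z (y : Fin g → ℤ))
  (hBpos : ∀ y : Y, y ≠ 0 → 0 < B y (y : Fin g → ℤ))
  {N : ℕ} (hNpos : 0 < N)
  (φ : ((Fin g → ℤ) →ₗ[ℤ] ℤ) → Y)
  (hφ : ∀ u : (Fin g → ℤ) →ₗ[ℤ] ℤ, B (φ u) = (N : ℤ) • u)

include B hBpos in
lemma B_inj' {y z : Y} (h : B y = B z) : y = z := by
  by_contra hne
  have h0 : y - z ≠ 0 := sub_ne_zero.mpr hne
  have hp := hBpos (y - z) h0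
  have h2 : B (y - z) = 0 := by rw [map_sub, h, sub_self]
  rw [h2] at hp; simp at hp

include hBpos hφ in
lemma phi_add' (u v : (Fin g → ℤ) →ₗ[ℤ] ℤ) : φ (u + v) = φ u + φ v := by
  apply B_inj' B hBpos; rw [hφ, map_add, hφ, hφ, smul_add]

include hBpos hφ in
lemma phi_zero' : φ 0 = 0 := by
  apply B_inj' B hBpos; rw [hφ, map_zero, smul_zero]

include hBpos hφ in
lemma phi_neg' (u : (Fin g → ℤ) →ₗ[ℤ] ℤ) : φ (-u) = -φ u := by
  have h := phi_add' B hBpos φ hφ u (-u)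
  rw [add_neg_cancel, phi_zero' B hBpos φ hφ] at h
  exact (neg_eq_of_add_eq_zero_right h.symm).symm

include hBsymm hNpos hφ in
lemma phi_symm' (u v : (Fin g → ℤ) →ₗ[ℤ] ℤ) :
    u ((φ v : Y) : Fin g → ℤ) = v ((φ u : Y) : Fin g → ℤ) := by
  have hN : (N : ℤ) ≠ 0 := by exact_mod_cast hNpos.ne'
  apply mul_left_cancel₀ hN
  have h1 : B (φ u) ((φ v : Y) : Fin g → ℤ) = (N : ℤ) * u ((φ v : Y) : Fin g → ℤ) := by
    rw [hφ]; simp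
  have h2 : B (φ v) ((φ u : Y) : Fin g → ℤ) = (N : ℤ) * v ((φ u : Y) : Fin g → ℤ) := by
    rw [hφ]; simp
  rw [← h1, ← h2, hBsymm]

include hBpos hφ in
/-- generator nonnegativity -/
lemma gen_nonneg (ℓ : ℕ) (α : Fin g → ℤ) (va vb : (Fin g → ℤ) →ₗ[ℤ] ℤ)
    (hb : α - (2 * (ℓ : ℤ)) • ((φ vb : Y) : Fin g → ℤ) ∈ SigmaL φ ℓ)
    (γ : Fin g → ℤ) (hγ : γ ∈ SigmaL φ ℓ) :
    0 ≤ (va - vb) (γ - (α - (2 * (ℓ : ℤ)) • ((φ va : Y) : Fin g → ℤ))) := by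
  set w : (Fin g → ℤ) →ₗ[ℤ] ℤ := va - vb with hwdef
  have hφw : ((φ va : Y) : Fin g → ℤ) = ((φ w : Y) : Fin g → ℤ) + ((φ vb : Y) : Fin g → ℤ) := by
    have h := phi_add' B hBpos φ hφ w vb
    rw [show w + vb = va by rw [hwdef]; abel] at h
    exact_mod_cast congrArg Subtype.val h
  have hA1 : 0 ≤ (ℓ : ℤ) * w ((φ w : Y) : Fin g → ℤ) + w γ := hγ w
  have hφneg : ((φ (-w) : Y) : Fin g → ℤ) = -((φ w : Y) : Fin g → ℤ) := by
    rw [phi_neg' B hBpos φ hφ]; rfl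
  have hA2 : 0 ≤ (ℓ : ℤ) * w ((φ w : Y) : Fin g → ℤ)
      - w (α - (2 * (ℓ : ℤ)) • ((φ vb : Y) : Fin g → ℤ)) := by
    have hEl : El φ ℓ (-w) = (ℓ : ℤ) * w ((φ w : Y) : Fin g → ℤ) := by
      simp only [El, hφneg, map_neg, LinearMap.neg_apply, neg_neg]
    have h := hb (-w)
    rw [hEl, LinearMap.neg_apply] at h
    linarith
  have e1 : (va - vb) (γ - (α - (2 * (ℓ : ℤ)) • ((φ va : Y) : Fin g → ℤ)))
      = w γ - w α + (2 * (ℓ : ℤ)) * (w ((φ w : Y) : Fin g → ℤ) + w ((φ vb : Y) : Fin g → ℤ)) := by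
    rw [← hwdef, map_sub, map_sub, map_smul, hφw, map_add, smul_eq_mul]; ring
  have e2 : w (α - (2 * (ℓ : ℤ)) • ((φ vb : Y) : Fin g → ℤ))
      = w α - (2 * (ℓ : ℤ)) * w ((φ vb : Y) : Fin g → ℤ) := by
    rw [map_sub, map_smul, smul_eq_mul]
  rw [e1]; rw [e2] at hA2; linarith

include hBsymm hBpos hNpos hφ in
/-- in the equality case we can shift the generator -/
lemma gen_eq (ℓ : ℕ) (α : Fin g → ℤ) (va vb : (Fin g → ℤ) →ₗ[ℤ] ℤ)
    (hb : α - (2 * (ℓ : ℤ)) • ((φ vb : Y) : Fin g → ℤ) ∈ SigmaL φ ℓ)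
    (γ : Fin g → ℤ) (hγ : γ ∈ SigmaL φ ℓ)
    (heq : (va - vb) (γ - (α - (2 * (ℓ : ℤ)) • ((φ va : Y) : Fin g → ℤ))) = 0) :
    ∃ γ' ∈ SigmaL φ ℓ,
      γ' - (α - (2 * (ℓ : ℤ)) • ((φ vb : Y) : Fin g → ℤ))
        = γ - (α - (2 * (ℓ : ℤ)) • ((φ va : Y) : Fin g → ℤ)) := by
  set w : (Fin g → ℤ) →ₗ[ℤ] ℤ := va - vb with hwdef
  have hφw : ((φ va : Y) : Fin g → ℤ) = ((φ w : Y) : Fin g → ℤ) + ((φ vb : Y) : Fin g → ℤ) := by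
    have h := phi_add' B hBpos φ hφ w vb
    rw [show w + vb = va by rw [hwdef]; abel] at h
    exact_mod_cast congrArg Subtype.val h
  have hA1 : 0 ≤ (ℓ : ℤ) * w ((φ w : Y) : Fin g → ℤ) + w γ := hγ w
  have hφneg : ((φ (-w) : Y) : Fin g → ℤ) = -((φ w : Y) : Fin g → ℤ) := by
    rw [phi_neg' B hBpos φ hφ]; rfl
  have hA2 : 0 ≤ (ℓ : ℤ) * w ((φ w : Y) : Fin g → ℤ)
      - w (α - (2 * (ℓ : ℤ)) • ((φ vb : Y) : Fin g → ℤ)) := by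
    have hEl : El φ ℓ (-w) = (ℓ : ℤ) * w ((φ w : Y) : Fin g → ℤ) := by
      simp only [El, hφneg, map_neg, LinearMap.neg_apply, neg_neg]
    have h := hb (-w)
    rw [hEl, LinearMap.neg_apply] at h
    linarith
  have e2 : w (α - (2 * (ℓ : ℤ)) • ((φ vb : Y) : Fin g → ℤ))
      = w α - (2 * (ℓ : ℤ)) * w ((φ vb : Y) : Fin g → ℤ) := by
    rw [map_sub, map_smul, smul_eq_mul]
  have e1 : (va - vb) (γ - (α - (2 * (ℓ : ℤ)) • ((φ va : Y) : Fin g → ℤ)))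
      = w γ - w α + (2 * (ℓ : ℤ)) * (w ((φ w : Y) : Fin g → ℤ) + w ((φ vb : Y) : Fin g → ℤ)) := by
    rw [← hwdef, map_sub, map_sub, map_smul, hφw, map_add, smul_eq_mul]; ring
  rw [e1] at heq; rw [e2] at hA2
  -- A1 = 0:
  have hA1eq : (ℓ : ℤ) * w ((φ w : Y) : Fin g → ℤ) + w γ = 0 := by linarith
  refine ⟨γ + (2 * (ℓ : ℤ)) • ((φ w : Y) : Fin g → ℤ), ?_, by rw [hφw, smul_add]; abel⟩
  intro u
  have h := hγ (u + w)
  have hφuw : ((φ (u + w) : Y) : Fin g → ℤ)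
      = ((φ u : Y) : Fin g → ℤ) + ((φ w : Y) : Fin g → ℤ) := by
    have h2 := phi_add' B hBpos φ hφ u w
    exact_mod_cast congrArg Subtype.val h2
  have hsym := phi_symm' B hBsymm hNpos φ hφ u w
  simp only [El, hφuw, map_add, LinearMap.add_apply] at h ⊢
  rw [map_smul, smul_eq_mul]
  rw [← hsym] at h
  linarith [h, hA1eq]

include hBpos hφ in
lemma cone_le (ℓ : ℕ) (α : Fin g → ℤ) (va vb : (Fin g → ℤ) →ₗ[ℤ] ℤ)
    (hb : α - (2 * (ℓ : ℤ)) • ((φ vb : Y) : Fin g → ℤ) ∈ SigmaL φ ℓ)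
    (z : Fin g → ℝ)
    (hz : z ∈ coneC φ ℓ (α - (2 * (ℓ : ℤ)) • ((φ va : Y) : Fin g → ℤ))) :
    extd vb z ≤ extd va z := by
  obtain ⟨n, c, v, hc, hv, rfl⟩ := hz
  rw [← sub_nonneg, ← extd_sub, extd_sum]
  apply Finset.sum_nonneg
  intro i _
  obtain ⟨γ, hγ, hvi⟩ := hv i
  rw [hvi, extd_iota]
  refine mul_nonneg (hc i) ?_
  exact_mod_cast gen_nonneg B hBpos φ hφ ℓ α va vb hb γ hγ

include hBsymm hBpos hNpos hφ in
lemma cone_eq (ℓ : ℕ) (α : Fin g → ℤ) (va vb : (Fin g → ℤ) →ₗ[ℤ] ℤ)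
    (hb : α - (2 * (ℓ : ℤ)) • ((φ vb : Y) : Fin g → ℤ) ∈ SigmaL φ ℓ)
    (z : Fin g → ℝ)
    (hz : z ∈ coneC φ ℓ (α - (2 * (ℓ : ℤ)) • ((φ va : Y) : Fin g → ℤ)))
    (heq : extd va z = extd vb z) :
    z ∈ coneC φ ℓ (α - (2 * (ℓ : ℤ)) • ((φ vb : Y) : Fin g → ℤ)) := by
  obtain ⟨n, c, v, hc, hv, rfl⟩ := hz
  choose γ hγ hvi using hv
  have e : (0 : ℝ) = ∑ i, c i *
      (((va - vb) (γ i - (α - (2 * (ℓ : ℤ)) • ((φ va : Y) : Fin g → ℤ))) : ℤ) : ℝ) := by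
    calc (0 : ℝ) = ∑ i, c i * extd (va - vb) (v i) := by
          rw [← extd_sum, extd_sub, heq, sub_self]
      _ = _ := Finset.sum_congr rfl fun i _ => by rw [hvi i, extd_iota]
  have hterms : ∀ i ∈ Finset.univ, c i *
      (((va - vb) (γ i - (α - (2 * (ℓ : ℤ)) • ((φ va : Y) : Fin g → ℤ))) : ℤ) : ℝ) = 0 := by
    refine (Finset.sum_eq_zero_iff_of_nonneg fun i _ => mul_nonneg (hc i) ?_).mp e.symm
    exact_mod_cast gen_nonneg B hBpos φ hφ ℓ α va vb hb (γ i) (hγ i)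
  have hrep : ∀ i : Fin n, ∃ w', (∃ γ' ∈ SigmaL φ ℓ,
      w' = iota (γ' - (α - (2 * (ℓ : ℤ)) • ((φ vb : Y) : Fin g → ℤ)))) ∧
      c i • v i = c i • w' := by
    intro i
    by_cases hci : c i = 0
    · exact ⟨iota ((α - (2 * (ℓ : ℤ)) • ((φ vb : Y) : Fin g → ℤ))
        - (α - (2 * (ℓ : ℤ)) • ((φ vb : Y) : Fin g → ℤ))), ⟨_, hb, rfl⟩, by simp [hci]⟩
    · have ht : (va - vb) (γ i - (α - (2 * (ℓ : ℤ)) • ((φ va : Y) : Fin g → ℤ))) = 0 := by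
        rcases mul_eq_zero.mp (hterms i (Finset.mem_univ i)) with h | h
        · exact absurd h hci
        · exact_mod_cast h
      obtain ⟨γ', hγ', hid⟩ := gen_eq B hBsymm hBpos hNpos φ hφ ℓ α va vb hb (γ i) (hγ i) ht
      exact ⟨iota (γ' - (α - (2 * (ℓ : ℤ)) • ((φ vb : Y) : Fin g → ℤ))), ⟨γ', hγ', rfl⟩,
        by rw [hvi i]; unfold iota; rw [hid]⟩
  choose v' hv'1 hv'2 using hrep
  exact ⟨n, c, v', hc, hv'1, Finset.sum_congr rfl fun i _ => hv'2 i⟩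
end PhiAlg

/-- for `β = α − 2ℓφ(v_β)`, `β′ = α − 2ℓφ(v_{β′})` in `Σ_ℓ^α` and
`x ∈ Cone(C_ℓ^β)`: (1) `v_β(x) ≥ v_{β′}(x)`, with equality iff `x ∈ Cone(C_ℓ^{β′})`;
(2) `v_β(x) ≥ 0`, with equality iff `x ∈ Cone(C_ℓ^α)`. -/
theorem statement14
    (g : ℕ) (hg : 1 ≤ g)
    (Y : Submodule ℤ (Fin g → ℤ))
    (hYfin : Y.toAddSubgroup.index ≠ 0)
    (B : Y →ₗ[ℤ] (Fin g → ℤ) →ₗ[ℤ] ℤ)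
    (hBsymm : ∀ y z : Y, B y (z : Fin g → ℤ) = B z (y : Fin g → ℤ))
    (hBpos : ∀ y : Y, y ≠ 0 → 0 < B y (y : Fin g → ℤ))
    (N : ℕ) (hN : N = (LinearMap.range B).toAddSubgroup.index) (hNpos : 0 < N)
    (φ : ((Fin g → ℤ) →ₗ[ℤ] ℤ) → Y)
    (hφ : ∀ u : (Fin g → ℤ) →ₗ[ℤ] ℤ, B (φ u) = (N : ℤ) • u)
    (Bb : (Fin g → ℝ) →ₗ[ℝ] (Fin g → ℝ) →ₗ[ℝ] ℝ)
    (hBbsymm : ∀ x y : Fin g → ℝ, Bb x y = Bb y x)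
    (hBbpos : ∀ x : Fin g → ℝ, x ≠ 0 → 0 < Bb x x)
    (hBbcompat : ∀ (y : Y) (x : Fin g → ℤ), Bb (iota (y : Fin g → ℤ)) (iota x) = (B y x : ℝ))
    (ℓ : ℕ) (hℓ : 0 < ℓ)
    (hint : IsIntegral (VorP Bb φ ℓ 0))
    (α : Fin g → ℤ) (hα : α ∈ SigmaL φ ℓ)
    (vβ vβ' : (Fin g → ℤ) →ₗ[ℤ] ℤ)
    (hβ : α - (2 * (ℓ : ℤ)) • ((φ vβ : Fin g → ℤ)) ∈ SigmaL φ ℓ)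
    (hβ' : α - (2 * (ℓ : ℤ)) • ((φ vβ' : Fin g → ℤ)) ∈ SigmaL φ ℓ)
    (x : Fin g → ℝ)
    (hx : x ∈ coneC φ ℓ (α - (2 * (ℓ : ℤ)) • ((φ vβ : Fin g → ℤ)))) :
    (extd vβ' x ≤ extd vβ x) ∧
    (extd vβ x = extd vβ' x ↔
      x ∈ coneC φ ℓ (α - (2 * (ℓ : ℤ)) • ((φ vβ' : Fin g → ℤ)))) ∧
    (0 ≤ extd vβ x) ∧
    (extd vβ x = 0 ↔ x ∈ coneC φ ℓ α) := by
  have h0 : α - (2 * (ℓ : ℤ)) • ((φ (0 : (Fin g → ℤ) →ₗ[ℤ] ℤ) : Fin g → ℤ)) = α := by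
    rw [phi_zero' B hBpos φ hφ]; simp
  have hb0 : α - (2 * (ℓ : ℤ)) • ((φ (0 : (Fin g → ℤ) →ₗ[ℤ] ℤ) : Fin g → ℤ)) ∈ SigmaL φ ℓ := by
    rw [h0]; exact hα
  have hle := cone_le B hBpos φ hφ ℓ α vβ vβ' hβ' x hx
  have hge0 : 0 ≤ extd vβ x := by
    have h := cone_le B hBpos φ hφ ℓ α vβ 0 hb0 x hx
    rwa [extd_zero] at h
  refine ⟨hle, ⟨?_, ?_⟩, hge0, ?_, ?_⟩
  · intro h
    exact cone_eq B hBsymm hBpos hNpos φ hφ ℓ α vβ vβ' hβ' x hx h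
  · intro h
    exact le_antisymm (cone_le B hBpos φ hφ ℓ α vβ' vβ hβ x h) hle
  · intro h
    have := cone_eq B hBsymm hBpos hNpos φ hφ ℓ α vβ 0 hb0 x hx
      (by rw [extd_zero]; exact h)
    rwa [h0] at this
  · intro h
    refine le_antisymm ?_ hge0
    have := cone_le B hBpos φ hφ ℓ α 0 vβ hβ x (by rw [h0]; exact h)
    rwa [extd_zero] at this


end NFC
end

section
/- Assume Σ_ℓ(0) is integral and let u ∈ X^∨. Then the set {z ∈ Hom_ℝ(X_ℝ, ℝ) : D_ℓ(x) + z(x) ≥ E_ℓ(u) + z(2ℓφ(u)) for all x ∈ X} equals the single point {−u} (where −u acts on X_ℝ by ℝ-linear extension). Equivalently, the cone τ := {(x₀, z) ∈ ℝ_{≥0} × Hom_ℝ(X_ℝ, ℝ) : (D_ℓ(y) − E_ℓ(u))·x₀ + z(y − 2ℓφ(u)) ≥ 0 for all y ∈ X} is the ray ℝ_{≥0}·(1, −u). -/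
open scoped BigOperators Pointwise

namespace NFC

/-- The ℝ-linear extension of an integral linear functional, as an ℝ-linear map. -/
noncomputable def extL {g : ℕ} (u : (Fin g → ℤ) →ₗ[ℤ] ℤ) : (Fin g → ℝ) →ₗ[ℝ] ℝ :=
  ∑ i, (u (Pi.single i 1) : ℝ) • (LinearMap.proj i : (Fin g → ℝ) →ₗ[ℝ] ℝ)

lemma extL_apply {g : ℕ} (u : (Fin g → ℤ) →ₗ[ℤ] ℤ) (x : Fin g → ℝ) :
    extL u x = ∑ i, (u (Pi.single i 1) : ℝ) * x i := by
  simp [extL, LinearMap.sum_apply]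

lemma lin_apply_eq_sum {g : ℕ} (u : (Fin g → ℤ) →ₗ[ℤ] ℤ) (x : Fin g → ℤ) :
    u x = ∑ i, x i * u (Pi.single i 1) := by
  have h1 : ∀ i : Fin g, (fun j => if i = j then (1:ℤ) else 0) = Pi.single i 1 := by
    intro i; funext j; simp [Pi.single_apply, eq_comm]
  have := LinearMap.pi_apply_eq_sum_univ u x
  simpa [h1, smul_eq_mul] using this

lemma iota_add {g : ℕ} (x y : Fin g → ℤ) : iota (x + y) = iota x + iota y := by
  funext i; simp [iota]

lemma iota_sub {g : ℕ} (x y : Fin g → ℤ) : iota (x - y) = iota x - iota y := by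
  funext i; simp [iota]

lemma iota_neg {g : ℕ} (x : Fin g → ℤ) : iota (-x) = -iota x := by
  funext i; simp [iota]

lemma iota_smul {g : ℕ} (c : ℤ) (x : Fin g → ℤ) : iota (c • x) = (c : ℝ) • iota x := by
  funext i; simp [iota]

lemma iota_zero {g : ℕ} : iota (0 : Fin g → ℤ) = 0 := by funext i; simp [iota]

def iotaL {g : ℕ} : (Fin g → ℤ) →ₗ[ℤ] (Fin g → ℝ) where
  toFun := iota
  map_add' := iota_add
  map_smul' := fun c x => by funext i; simp [iota]

lemma extL_iota {g : ℕ} (u : (Fin g → ℤ) →ₗ[ℤ] ℤ) (x : Fin g → ℤ) :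
    extL u (iota x) = (u x : ℝ) := by
  rw [extL_apply, lin_apply_eq_sum u x]
  push_cast
  exact Finset.sum_congr rfl fun i _ => mul_comm _ _

lemma iota_single {g : ℕ} (i : Fin g) : iota (Pi.single i 1) = Pi.single i 1 := by
  funext j
  simp [iota, Pi.single_apply]

lemma iotaL_apply {g : ℕ} (x : Fin g → ℤ) : iotaL x = iota x := rfl

set_option maxHeartbeats 1600000 in
/-- if `Σ_ℓ(0)` is integral then for `u ∈ X^∨`, the set of real linear
functionals `z` with `D_ℓ(x) + z(x) ≥ E_ℓ(u) + z(2ℓφ(u))` for all `x ∈ X` is exactly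
`{−u}` (with `u` extended ℝ-linearly). -/
theorem statement16
    (g : ℕ) (hg : 1 ≤ g)
    (Y : Submodule ℤ (Fin g → ℤ))
    (hYfin : Y.toAddSubgroup.index ≠ 0)
    (B : Y →ₗ[ℤ] (Fin g → ℤ) →ₗ[ℤ] ℤ)
    (hBsymm : ∀ y z : Y, B y (z : Fin g → ℤ) = B z (y : Fin g → ℤ))
    (hBpos : ∀ y : Y, y ≠ 0 → 0 < B y (y : Fin g → ℤ))
    (N : ℕ) (hN : N = (LinearMap.range B).toAddSubgroup.index) (hNpos : 0 < N)
    (φ : ((Fin g → ℤ) →ₗ[ℤ] ℤ) → Y)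
    (hφ : ∀ u : (Fin g → ℤ) →ₗ[ℤ] ℤ, B (φ u) = (N : ℤ) • u)
    (Bb : (Fin g → ℝ) →ₗ[ℝ] (Fin g → ℝ) →ₗ[ℝ] ℝ)
    (hBbsymm : ∀ x y : Fin g → ℝ, Bb x y = Bb y x)
    (hBbpos : ∀ x : Fin g → ℝ, x ≠ 0 → 0 < Bb x x)
    (hBbcompat : ∀ (y : Y) (x : Fin g → ℤ), Bb (iota (y : Fin g → ℤ)) (iota x) = (B y x : ℝ))
    (ℓ : ℕ) (hℓ : 0 < ℓ)
    (D : (Fin g → ℤ) → ℤ)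
    (hD : ∀ γ ∈ SigmaL φ ℓ, ∀ z : (Fin g → ℤ) →ₗ[ℤ] ℤ,
      D (γ + (2 * (ℓ : ℤ)) • ((φ z : Fin g → ℤ))) = El φ ℓ z + z γ)
    (hint : IsIntegral (VorP Bb φ ℓ 0))
    (u : (Fin g → ℤ) →ₗ[ℤ] ℤ) :
    {z : (Fin g → ℝ) →ₗ[ℝ] ℝ | ∀ x : Fin g → ℤ,
        (El φ ℓ u : ℝ) + z (iota ((2 * (ℓ : ℤ)) • ((φ u : Fin g → ℤ)))) ≤
          (D x : ℝ) + z (iota x)} = {-(extL u)} := by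
  -- basic facts about φ
  have hNZ : ((N : ℤ) : ℤ) ≠ 0 := by exact_mod_cast hNpos.ne'
  have hBinj : ∀ y : Y, B y = 0 → y = 0 := by
    intro y h
    by_contra hy
    have := hBpos y hy
    rw [h] at this
    simp at this
  have hφ0 : φ 0 = 0 := by
    apply hBinj
    rw [hφ 0]
    simp
  have hφadd : ∀ v w : (Fin g → ℤ) →ₗ[ℤ] ℤ, φ (v + w) = φ v + φ w := by
    intro v w
    have h : φ (v + w) - (φ v + φ w) = 0 := by
      apply hBinj
      rw [map_sub, map_add, hφ, hφ, hφ]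
      rw [smul_add]
      abel
    linear_combination (norm := module) h
  have hφneg : ∀ w : (Fin g → ℤ) →ₗ[ℤ] ℤ, φ (-w) = -φ w := by
    intro w
    have h := hφadd w (-w)
    rw [add_neg_cancel, hφ0] at h
    exact eq_neg_of_add_eq_zero_right h.symm
  have hφsub : ∀ v w : (Fin g → ℤ) →ₗ[ℤ] ℤ, φ (v - w) = φ v - φ w := by
    intro v w
    rw [sub_eq_add_neg, hφadd, hφneg, sub_eq_add_neg]
  -- symmetry and positivity of u(φ v)
  have happ : ∀ v w : (Fin g → ℤ) →ₗ[ℤ] ℤ, ∀ x : Fin g → ℤ,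
      B (φ v) x = (N : ℤ) * v x := by
    intro v w x
    rw [hφ v]
    simp
  have hsym : ∀ v w : (Fin g → ℤ) →ₗ[ℤ] ℤ,
      v ((φ w : Y) : Fin g → ℤ) = w ((φ v : Y) : Fin g → ℤ) := by
    intro v w
    have h1 : B (φ v) ((φ w : Y) : Fin g → ℤ) = (N : ℤ) * v ((φ w : Y) : Fin g → ℤ) :=
      happ v w _
    have h2 : B (φ w) ((φ v : Y) : Fin g → ℤ) = (N : ℤ) * w ((φ v : Y) : Fin g → ℤ) :=
      happ w v _
    have h3 := hBsymm (φ v) (φ w)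
    rw [h1, h2] at h3
    exact mul_left_cancel₀ hNZ h3
  have hqnn : ∀ w : (Fin g → ℤ) →ₗ[ℤ] ℤ, 0 ≤ w ((φ w : Y) : Fin g → ℤ) := by
    intro w
    rcases eq_or_ne (φ w) 0 with h | h
    · rw [h]; simp
    · have h1 := hBpos (φ w) h
      rw [happ w w] at h1
      nlinarith [h1]
  have hElnn : ∀ w : (Fin g → ℤ) →ₗ[ℤ] ℤ, 0 ≤ El φ ℓ w := by
    intro w
    have := hqnn w
    unfold El
    positivity
  have hElneg : ∀ w : (Fin g → ℤ) →ₗ[ℤ] ℤ, El φ ℓ (-w) = El φ ℓ w := by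
    intro w
    unfold El
    rw [hφneg w]
    simp
  -- Bb computations
  have hBbnn : ∀ x : Fin g → ℝ, 0 ≤ Bb x x := by
    intro x
    rcases eq_or_ne x 0 with h | h
    · rw [h]; simp
    · exact (hBbpos x h).le
  have hba : ∀ (z : (Fin g → ℤ) →ₗ[ℤ] ℤ) (x : Fin g → ℤ),
      Bb (iota ((φ z : Y) : Fin g → ℤ)) (iota x) = ((N : ℤ) * z x : ℤ) := by
    intro z x
    rw [hBbcompat (φ z) x, happ z z x]
  have keyBb : ∀ (x : Fin g → ℤ) (z : (Fin g → ℤ) →ₗ[ℤ] ℤ),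
      Bb (iota x - iota ((2 * (ℓ : ℤ)) • ((φ z : Y) : Fin g → ℤ)))
         (iota x - iota ((2 * (ℓ : ℤ)) • ((φ z : Y) : Fin g → ℤ)))
      = Bb (iota x) (iota x) + (4 * (ℓ : ℝ) * (N : ℝ)) * ((El φ ℓ z : ℝ) - (z x : ℝ)) := by
    intro x z
    rw [iota_smul]
    set a := iota x
    set b := iota ((φ z : Y) : Fin g → ℤ)
    set c : ℝ := ((2 * (ℓ : ℤ) : ℤ) : ℝ)
    have e1 : Bb (a - c • b) (a - c • b)
        = Bb a a - c * Bb a b - c * Bb b a + c * c * Bb b b := by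
      simp only [map_sub, map_smul, LinearMap.sub_apply, LinearMap.smul_apply, smul_eq_mul]
      ring
    have e2 : Bb b a = ((N : ℤ) * z x : ℤ) := hba z x
    have e3 : Bb a b = ((N : ℤ) * z x : ℤ) := by rw [hBbsymm]; exact e2
    have e4 : Bb b b = ((N : ℤ) * z ((φ z : Y) : Fin g → ℤ) : ℤ) := hba z _
    rw [e1, e2, e3, e4]
    unfold El
    push_cast [c]
    ring
  -- Sigma vs Voronoi
  have hSV : ∀ α : Fin g → ℤ, iota α ∈ VorP Bb φ ℓ 0 ↔ α ∈ SigmaL φ ℓ := by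
    intro α
    have hzero : iota ((2 * (ℓ : ℤ)) • ((φ 0 : Y) : Fin g → ℤ)) = 0 := by
      rw [hφ0]
      simp [iota_zero, iota_smul]
    constructor
    · intro h w
      have h1 := h (-w)
      rw [hzero, sub_zero] at h1
      have h2 : Bb (iota α) (iota α)
          ≤ Bb (iota α - iota ((2 * (ℓ : ℤ)) • ((φ (-w) : Y) : Fin g → ℤ)))
              (iota α - iota ((2 * (ℓ : ℤ)) • ((φ (-w) : Y) : Fin g → ℤ))) := by
        exact (Real.sqrt_le_sqrt_iff (hBbnn _)).mp h1
      rw [keyBb α (-w)] at h2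
      have h3 : (0 : ℝ) ≤ (El φ ℓ (-w) : ℝ) - ((-w) α : ℝ) := by
        have hpos : (0 : ℝ) < 4 * (ℓ : ℝ) * (N : ℝ) := by positivity
        nlinarith
      rw [hElneg w] at h3
      have h4 : (0 : ℝ) ≤ (El φ ℓ w : ℝ) + (w α : ℝ) := by
        simp only [LinearMap.neg_apply, Int.cast_neg] at h3
        linarith
      exact_mod_cast h4
    · intro h w
      rw [hzero, sub_zero]
      apply Real.sqrt_le_sqrt
      rw [keyBb α w]
      have h1 := h (-w)
      rw [hElneg w] at h1
      simp only [LinearMap.neg_apply] at h1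
      have h2 : (0 : ℝ) ≤ (El φ ℓ w : ℝ) - (w α : ℝ) := by
        have : (0 : ℤ) ≤ El φ ℓ w - w α := by linarith
        exact_mod_cast this
      have hpos : (0 : ℝ) ≤ 4 * (ℓ : ℝ) * (N : ℝ) := by positivity
      nlinarith [mul_nonneg hpos h2]
  -- 0 ∈ Σ and symmetry of Σ
  have hzeroS : (0 : Fin g → ℤ) ∈ SigmaL φ ℓ := by
    intro w
    simpa using hElnn w
  have hnegS : ∀ α ∈ SigmaL φ ℓ, -α ∈ SigmaL φ ℓ := by
    intro α hα w
    have h1 := hα (-w)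
    rw [hElneg w] at h1
    simp only [LinearMap.neg_apply] at h1 ⊢
    simp only [map_neg]
    linarith
  -- expansion of El of a difference
  have hElsub : ∀ v w : (Fin g → ℤ) →ₗ[ℤ] ℤ,
      El φ ℓ (v - w) = El φ ℓ v + El φ ℓ w - 2 * (ℓ : ℤ) * (w ((φ v : Y) : Fin g → ℤ)) := by
    intro v w
    unfold El
    have hc : ((φ (v - w) : Y) : Fin g → ℤ) = ((φ v : Y) : Fin g → ℤ) - ((φ w : Y) : Fin g → ℤ) := by
      rw [hφsub]
      simp
    rw [hc]
    simp only [LinearMap.sub_apply, map_sub]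
    rw [hsym v w]
    ring
  -- decomposition
  have hdec : ∀ x : Fin g → ℤ, ∃ γ ∈ SigmaL φ ℓ, ∃ z : (Fin g → ℤ) →ₗ[ℤ] ℤ,
      x = γ + (2 * (ℓ : ℤ)) • ((φ z : Y) : Fin g → ℤ) := by
    intro x
    set P : ℤ → Prop := fun n => ∃ z : (Fin g → ℤ) →ₗ[ℤ] ℤ, El φ ℓ z - z x = n with hP
    have hbdd : ∃ b : ℤ, ∀ n : ℤ, P n → b ≤ n := by
      refine ⟨-(⌈Bb (iota x) (iota x)⌉ + 1), ?_⟩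
      rintro n ⟨z, rfl⟩
      have h1 := hBbnn (iota x - iota ((2 * (ℓ : ℤ)) • ((φ z : Y) : Fin g → ℤ)))
      rw [keyBb x z] at h1
      have hC : Bb (iota x) (iota x) ≤ (⌈Bb (iota x) (iota x)⌉ : ℝ) := Int.le_ceil _
      have hC0 : (0 : ℤ) ≤ ⌈Bb (iota x) (iota x)⌉ := Int.ceil_nonneg (hBbnn (iota x))
      rcases le_or_gt 0 (El φ ℓ z - z x) with h | h
      · linarith
      · have hl1 : (1 : ℝ) ≤ (ℓ : ℝ) := by exact_mod_cast hℓ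
        have hn1 : (1 : ℝ) ≤ (N : ℝ) := by exact_mod_cast hNpos
        have hnr : ((El φ ℓ z - z x : ℤ) : ℝ) < 0 := by exact_mod_cast h
        have hd : ((El φ ℓ z : ℝ) - (z x : ℝ)) < 0 := by
          push_cast at hnr; linarith
        have h5 : 4 * (ℓ : ℝ) * (N : ℝ) * ((El φ ℓ z : ℝ) - (z x : ℝ))
            ≤ ((El φ ℓ z : ℝ) - (z x : ℝ)) := by
          have hfac : (0:ℝ) ≤ (4 * (ℓ : ℝ) * (N : ℝ) - 1) * (-((El φ ℓ z : ℝ) - (z x : ℝ))) :=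
            mul_nonneg (by nlinarith) (by linarith)
          nlinarith [hfac]
        have key : ((-(⌈Bb (iota x) (iota x)⌉ + 1) : ℤ) : ℝ) ≤ ((El φ ℓ z - z x : ℤ) : ℝ) := by
          push_cast
          linarith
        exact_mod_cast key
    have hinh : ∃ n : ℤ, P n := ⟨El φ ℓ 0 - (0 : (Fin g → ℤ) →ₗ[ℤ] ℤ) x, 0, rfl⟩
    obtain ⟨m, ⟨z₀, hz₀⟩, hmin⟩ := Int.exists_least_of_bdd hbdd hinh
    refine ⟨x - (2 * (ℓ : ℤ)) • ((φ z₀ : Y) : Fin g → ℤ), ?_, z₀, by abel⟩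
    intro w
    have h1 : m ≤ El φ ℓ (z₀ - w) - (z₀ - w) x := hmin _ ⟨z₀ - w, rfl⟩
    rw [← hz₀] at h1
    rw [hElsub z₀ w] at h1
    simp only [LinearMap.sub_apply, map_add, map_smul, smul_eq_mul, map_sub] at h1 ⊢
    linarith
  -- the key inequality computation for membership and minimality
  have hmem : ∀ z₁ : (Fin g → ℝ) →ₗ[ℝ] ℝ, z₁ = -(extL u) →
      ∀ x : Fin g → ℤ,
        (El φ ℓ u : ℝ) + z₁ (iota ((2 * (ℓ : ℤ)) • ((φ u : Y) : Fin g → ℤ))) ≤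
          (D x : ℝ) + z₁ (iota x) := by
    rintro z₁ rfl x
    obtain ⟨γ, hγ, z, rfl⟩ := hdec x
    rw [hD γ hγ z]
    simp only [LinearMap.neg_apply, extL_iota]
    have key : (0 : ℤ) ≤ El φ ℓ (z - u) + (z - u) γ := hγ (z - u)
    rw [hElsub z u] at key
    have hux : u (γ + (2 * (ℓ : ℤ)) • ((φ z : Y) : Fin g → ℤ))
        = u γ + 2 * (ℓ : ℤ) * u ((φ z : Y) : Fin g → ℤ) := by
      rw [map_add, map_smul, smul_eq_mul]
    have huu : u ((2 * (ℓ : ℤ)) • ((φ u : Y) : Fin g → ℤ))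
        = 2 * (ℓ : ℤ) * u ((φ u : Y) : Fin g → ℤ) := by
      rw [map_smul, smul_eq_mul]
    have hsymzu := hsym z u
    simp only [LinearMap.sub_apply] at key
    have hgoal : (El φ ℓ u : ℤ) - u ((2 * (ℓ : ℤ)) • ((φ u : Y) : Fin g → ℤ))
        ≤ (El φ ℓ z + z γ) - u (γ + (2 * (ℓ : ℤ)) • ((φ z : Y) : Fin g → ℤ)) := by
      rw [hux, huu]
      unfold El at key ⊢
      linarith
    have hgr : ((El φ ℓ u - u ((2 * (ℓ : ℤ)) • ((φ u : Y) : Fin g → ℤ)) : ℤ) : ℝ)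
        ≤ (((El φ ℓ z + z γ) - u (γ + (2 * (ℓ : ℤ)) • ((φ z : Y) : Fin g → ℤ)) : ℤ) : ℝ) := by
      exact_mod_cast hgoal
    push_cast at hgr ⊢
    linarith
  -- main set equality
  ext z
  simp only [Set.mem_setOf_eq, Set.mem_singleton_iff]
  constructor
  · intro hz
    -- z agrees with -u on Σ_ℓ
    have step1 : ∀ γ ∈ SigmaL φ ℓ, 0 ≤ (u γ : ℝ) + z (iota γ) := by
      intro γ hγ
      have h1 := hz (γ + (2 * (ℓ : ℤ)) • ((φ u : Y) : Fin g → ℤ))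
      rw [hD γ hγ u, iota_add, map_add] at h1
      push_cast at h1
      linarith
    have step2 : ∀ γ ∈ SigmaL φ ℓ, z (iota γ) = -(u γ : ℝ) := by
      intro γ hγ
      have h1 := step1 γ hγ
      have h2 := step1 (-γ) (hnegS γ hγ)
      rw [iota_neg, map_neg, map_neg] at h2
      push_cast at h2
      linarith
    obtain ⟨-, -, -, -, b, hb⟩ := hint
    have hbS : ∀ i, b i ∈ SigmaL φ ℓ := fun i => (hSV (b i)).mp (hb i)
    -- the functional z + extL u vanishes on the lattice
    set w : (Fin g → ℝ) →ₗ[ℝ] ℝ := z + extL u with hw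
    have hwb : ∀ i, ((w.restrictScalars ℤ).comp iotaL) (b i) = (0 : (Fin g → ℤ) →ₗ[ℤ] ℝ) (b i) := by
      intro i
      simp only [LinearMap.comp_apply, LinearMap.restrictScalars_apply, LinearMap.zero_apply]
      show w (iota (b i)) = 0
      rw [hw]
      simp only [LinearMap.add_apply, extL_iota]
      rw [step2 (b i) (hbS i)]
      ring
    have hwall : (w.restrictScalars ℤ).comp iotaL = 0 := Module.Basis.ext b hwb
    have hwiota : ∀ x : Fin g → ℤ, w (iota x) = 0 := by
      intro x
      have := LinearMap.congr_fun hwall x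
      simpa [iotaL_apply] using this
    have hw0 : w = 0 := by
      apply Module.Basis.ext (Pi.basisFun ℝ (Fin g))
      intro i
      have h1 : (Pi.basisFun ℝ (Fin g)) i = iota (Pi.single i 1) := by
        rw [iota_single]
        simp [Pi.basisFun_apply]
      rw [h1, hwiota]
      simp
    rw [hw] at hw0
    exact eq_neg_of_add_eq_zero_left hw0
  · intro hz
    exact hmem z hz


end NFC
end

section
/- Let σ ⊆ ℝ × X^∨_ℝ be the convex cone generated by a finite subset of ℤ × X^∨ all of whose elements have nonnegative first coordinate (equivalently, (1,0) ∈ σ^∨). Then σ ∩ ({0} × X^∨_ℝ) = {(0,0)} if and only if for every (z₀, z) ∈ ℤ × X there exists a ∈ ℤ with (a, z) ∈ σ^∨; i.e., if and only if ℤ·(1,0) + (σ^∨ ∩ (ℤ × X)) = ℤ × X. -/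
open scoped BigOperators

namespace NFC

/-- The embedding of `ℤ × X` into `ℝ × X^∨_ℝ` (resp. `ℝ × X_ℝ`). -/
def emb {g : ℕ} (p : ℤ × (Fin g → ℤ)) : ℝ × (Fin g → ℝ) := ((p.1 : ℝ), iota p.2)

/-- The dual cone of a subset `σ ⊆ ℝ × X^∨_ℝ` inside `ℝ × X_ℝ`, with respect to the
pairing `⟨(u₀, u), (x₀, x)⟩ = u₀·x₀ + u(x)`. -/
def dualCone {g : ℕ} (σ : Set (ℝ × (Fin g → ℝ))) : Set (ℝ × (Fin g → ℝ)) :=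
  {q | ∀ w ∈ σ, 0 ≤ w.1 * q.1 + ∑ i, w.2 i * q.2 i}

lemma gen_mem_hull {g : ℕ} (S : Set (ℤ × (Fin g → ℤ))) {p : ℤ × (Fin g → ℤ)} (hp : p ∈ S) :
    emb p ∈ conicHull (emb '' S) :=
  ⟨1, fun _ => 1, fun _ => emb p, fun _ => zero_le_one, fun _ => ⟨p, hp, rfl⟩, by simp⟩

lemma zero_mem_hull {g : ℕ} (T : Set (ℝ × (Fin g → ℝ))) : (0 : ℝ × (Fin g → ℝ)) ∈ conicHull T :=
  ⟨0, Fin.elim0, Fin.elim0, fun i => i.elim0, fun i => i.elim0, by simp⟩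

lemma mem_dual_of_gen {g : ℕ} (S : Set (ℤ × (Fin g → ℤ))) (q : ℝ × (Fin g → ℝ))
    (h : ∀ p ∈ S, 0 ≤ (emb p).1 * q.1 + ∑ i, (emb p).2 i * q.2 i) :
    q ∈ dualCone (conicHull (emb '' S)) := by
  intro w hw
  obtain ⟨n, c, v, hc, hv, rfl⟩ := hw
  have key : (∑ j, c j • v j).1 * q.1 + ∑ i, (∑ j, c j • v j).2 i * q.2 i
      = ∑ j, c j * ((v j).1 * q.1 + ∑ i, (v j).2 i * q.2 i) := by
    rw [Prod.fst_sum, Prod.snd_sum, Finset.sum_mul]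
    simp only [Prod.smul_fst, Prod.smul_snd, smul_eq_mul, Finset.sum_apply, Pi.smul_apply,
      Finset.sum_mul]
    rw [Finset.sum_comm, ← Finset.sum_add_distrib]
    refine Finset.sum_congr rfl fun j _ => ?_
    rw [mul_add, Finset.mul_sum]
    simp [mul_assoc]
  rw [key]
  refine Finset.sum_nonneg fun j _ => ?_
  obtain ⟨p, hp, hpe⟩ := hv j
  exact mul_nonneg (hc j) (hpe ▸ h p hp)

/-- for a convex cone `σ ⊆ ℝ × X^∨_ℝ` generated by a finite subset of
`ℤ × X^∨` whose elements have nonnegative first coordinate,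
`σ ∩ ({0} × X^∨_ℝ) = {(0,0)}` iff for every `z ∈ X` there is `a ∈ ℤ` with `(a, z) ∈ σ^∨`,
i.e. iff `ℤ·(1,0) + (σ^∨ ∩ (ℤ × X)) = ℤ × X`. -/
theorem statement18
    (g : ℕ) (hg : 1 ≤ g)
    (S : Set (ℤ × (Fin g → ℤ))) (hSfin : S.Finite)
    (hSpos : ∀ p ∈ S, 0 ≤ p.1)
    (σ : Set (ℝ × (Fin g → ℝ))) (hσ : σ = conicHull (emb '' S)) :
    (σ ∩ {p : ℝ × (Fin g → ℝ) | p.1 = 0} = {(0 : ℝ × (Fin g → ℝ))}) ↔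
    (∀ z : Fin g → ℤ, ∃ a : ℤ, emb (a, z) ∈ dualCone σ) := by
  subst hσ
  -- the key combinatorial condition
  have hCiff : ∀ (C : Prop), C ↔ C := fun _ => Iff.rfl
  constructor
  · -- LHS → RHS
    intro hL
    -- first extract the condition C
    have hC : ∀ p ∈ S, p.1 = 0 → p.2 = 0 := by
      intro p hp hp1
      have hmem : emb p ∈ conicHull (emb '' S) ∩ {q : ℝ × (Fin g → ℝ) | q.1 = 0} :=
        ⟨gen_mem_hull S hp, by simp [emb, hp1]⟩
      rw [hL] at hmem
      have : emb p = 0 := hmem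
      funext i
      have h2 : iota p.2 = 0 := congrArg Prod.snd this
      have h3 : (p.2 i : ℝ) = 0 := congrFun h2 i
      exact_mod_cast h3
    intro z
    classical
    set T := hSfin.toFinset with hT
    set a : ℤ := ∑ p ∈ T, |∑ i, p.2 i * z i| with ha
    have ha0 : 0 ≤ a := Finset.sum_nonneg fun p _ => abs_nonneg _
    refine ⟨a, mem_dual_of_gen S _ fun p hp => ?_⟩
    have hint : 0 ≤ p.1 * a + ∑ i, p.2 i * z i := by
      rcases lt_or_eq_of_le (hSpos p hp) with h1 | h1
      · have hmem : p ∈ T := hSfin.mem_toFinset.mpr hp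
        have habs : |∑ i, p.2 i * z i| ≤ a := by
          have := Finset.single_le_sum (f := fun q : ℤ × (Fin g → ℤ) => |∑ i, q.2 i * z i|)
            (s := T) (fun q _ => abs_nonneg _) hmem
          simpa [ha] using this
        have h2 : -(∑ i, p.2 i * z i) ≤ a := le_trans (neg_le_abs _) habs
        have h3 : a ≤ p.1 * a := le_mul_of_one_le_left ha0 h1
        linarith
      · have hp2 : p.2 = 0 := hC p hp h1.symm
        rw [← h1, hp2]
        simp
    have : ((0 : ℤ) : ℝ) ≤ ((p.1 * a + ∑ i, p.2 i * z i : ℤ) : ℝ) := by exact_mod_cast hint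
    push_cast at this
    simpa [emb, iota] using this
  · -- RHS → LHS
    intro hR
    have hC : ∀ p ∈ S, p.1 = 0 → p.2 = 0 := by
      intro p hp hp1
      obtain ⟨a, hdual⟩ := hR (-p.2)
      have hσp := hdual (emb p) (gen_mem_hull S hp)
      have h4 : (emb p).1 * (emb (a, -p.2)).1 + ∑ i, (emb p).2 i * (emb (a, -p.2)).2 i
          = -∑ i, ((p.2 i : ℝ)) ^ 2 := by
        rw [← Finset.sum_neg_distrib]
        simp only [emb, iota, hp1, Int.cast_zero, zero_mul, zero_add, Pi.neg_apply, Int.cast_neg]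
        exact Finset.sum_congr rfl fun i _ => by ring
      rw [h4] at hσp
      have hnn : 0 ≤ ∑ i, ((p.2 i : ℝ)) ^ 2 :=
        Finset.sum_nonneg fun i _ => sq_nonneg _
      have hzero : ∑ i, ((p.2 i : ℝ)) ^ 2 = 0 := le_antisymm (by linarith) hnn
      funext i
      have h5 := (Finset.sum_eq_zero_iff_of_nonneg (fun i _ => sq_nonneg ((p.2 i : ℝ)))).mp
        hzero i (Finset.mem_univ i)
      have h6 : (p.2 i : ℝ) = 0 := sq_eq_zero_iff.mp h5
      exact_mod_cast h6
    ext q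
    simp only [Set.mem_inter_iff, Set.mem_setOf_eq, Set.mem_singleton_iff]
    constructor
    · rintro ⟨⟨n, c, v, hc, hv, rfl⟩, hq1⟩
      choose p hpS hpe using hv
      have hterm : ∀ j ∈ Finset.univ (α := Fin n), c j * ((p j).1 : ℝ) = 0 := by
        have hsum : ∑ j, c j * ((p j).1 : ℝ) = 0 := by
          have : (∑ j, c j • v j).1 = ∑ j, c j * ((p j).1 : ℝ) := by
            rw [Prod.fst_sum]
            exact Finset.sum_congr rfl fun j _ => by
              rw [← hpe j]; simp [emb]
          rw [← this]; exact hq1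
        exact fun j _ => (Finset.sum_eq_zero_iff_of_nonneg
          (fun j _ => mul_nonneg (hc j) (by exact_mod_cast hSpos (p j) (hpS j)))).mp hsum j
          (Finset.mem_univ j)
      refine Finset.sum_eq_zero fun j _ => ?_
      rcases mul_eq_zero.mp (hterm j (Finset.mem_univ j)) with h | h
      · rw [h, zero_smul]
      · have h1 : (p j).1 = 0 := by exact_mod_cast h
        have h2 : (p j).2 = 0 := hC (p j) (hpS j) h1
        have : v j = 0 := by
          rw [← hpe j]
          ext <;> simp [emb, iota, h1, h2]
        rw [this, smul_zero]
    · rintro rfl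
      exact ⟨zero_mem_hull _, rfl⟩

end NFC
end
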